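/- arXiv:2004.01074 — 3 statements merged into one kernel-verified Lean document; each statement's English description precedes it below -/
import Mathlib

section
/- The matrix A₀ = [[1, -1/2, 0], [1, 0, λ^β], [0, -2λ^β, 0]] (λ > 1, β > 2) has exactly one real eigenvalue, and this eigenvalue lies in the open interval (3/4, 1). -/
open Polynomial

lemma charpoly_eq (t : ℝ) :
    (Matrix.charpoly (!![1, -1/2, 0; 1, 0, t; 0, -2*t, 0] : Matrix (Fin 3) (Fin 3) ℝ))
    = X^3 - X^2 + C (2*t^2 + 1/2) * X - C (2*t^2) := by
  simp [Matrix.charpoly, Matrix.charmatrix, Matrix.det_fin_three, neg_div, map_neg]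
  ring

lemma froot_iff (t μ : ℝ) :
    (Matrix.charpoly (!![1, -1/2, 0; 1, 0, t; 0, -2*t, 0] : Matrix (Fin 3) (Fin 3) ℝ)).IsRoot μ
    ↔ μ^3 - μ^2 + (2*t^2 + 1/2)*μ - 2*t^2 = 0 := by
  rw [charpoly_eq, Polynomial.IsRoot.def]
  simp

lemma fmono (t : ℝ) : StrictMono (fun μ : ℝ => μ^3 - μ^2 + (2*t^2 + 1/2)*μ - 2*t^2) := by
  intro a b hab
  simp only
  nlinarith [sq_nonneg (a+b), sq_nonneg (a-b), sq_nonneg (a+b-1), sq_nonneg t, hab]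

/-- The matrix `A₀ = [[1, -1/2, 0], [1, 0, λ^β], [0, -2λ^β, 0]]` (with `λ > 1`, `β > 2`)
has exactly one real eigenvalue, and this eigenvalue lies in `(3/4, 1)`. -/
theorem stmt_4 (lam β : ℝ) (hlam : 1 < lam) (hβ : 2 < β) :
    (∃! μ : ℝ, (Matrix.charpoly (!![1, -1/2, 0; 1, 0, lam ^ β; 0, -2 * lam ^ β, 0] :
        Matrix (Fin 3) (Fin 3) ℝ)).IsRoot μ) ∧
    (∀ μ : ℝ, (Matrix.charpoly (!![1, -1/2, 0; 1, 0, lam ^ β; 0, -2 * lam ^ β, 0] :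
        Matrix (Fin 3) (Fin 3) ℝ)).IsRoot μ → 3 / 4 < μ ∧ μ < 1) := by
  set t := lam ^ β with ht_def
  have ht : 1 < t := Real.one_lt_rpow_iff_of_pos (by linarith) |>.2 (Or.inl ⟨hlam, by linarith⟩)
  set f : ℝ → ℝ := fun μ => μ^3 - μ^2 + (2*t^2 + 1/2)*μ - 2*t^2 with hf
  have hmono : StrictMono f := fmono t
  have hiff : ∀ μ : ℝ, (Matrix.charpoly (!![1, -1/2, 0; 1, 0, t; 0, -2 * t, 0] :
      Matrix (Fin 3) (Fin 3) ℝ)).IsRoot μ ↔ f μ = 0 := by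
    intro μ
    have := froot_iff t μ
    rw [show (-2*t : ℝ) = -(2*t) by ring] at this ⊢
    exact this
  -- values at endpoints
  have h34 : f (3/4) < 0 := by
    simp only [hf]; nlinarith [sq_nonneg t]
  have h1 : f 1 > 0 := by simp only [hf]; ring_nf; norm_num
  have hcont : ContinuousOn f (Set.Icc (3/4) 1) := by
    apply Continuous.continuousOn; simp only [hf]; continuity
  obtain ⟨μ₀, hμ₀mem, hμ₀⟩ : ∃ μ₀ ∈ Set.Ioo (3/4 : ℝ) 1, f μ₀ = 0 := by
    have := intermediate_value_Ioo (by norm_num : (3/4:ℝ) ≤ 1) hcont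
    exact this ⟨h34, h1⟩
  have bound : ∀ μ : ℝ, f μ = 0 → 3/4 < μ ∧ μ < 1 := by
    intro μ hμ
    constructor
    · by_contra h
      push_neg at h
      have := hmono.monotone h
      rw [hμ] at this; linarith
    · by_contra h
      push_neg at h
      have := hmono.monotone h
      rw [hμ] at this; linarith
  refine ⟨⟨μ₀, (hiff μ₀).2 hμ₀, ?_⟩, fun μ hμ => bound μ ((hiff μ).1 hμ)⟩
  intro y hy
  exact hmono.injective (by rw [(hiff y).1 hy, hμ₀])
end

section
/- Suppose real numbers k, a, b, μ, ν, ω, y₁, y₂, y₃, z₁, z₂, z₃ satisfy: ν ∈ (0,1), μ ≥ 1, |a| < ωk, |b| < ωk, k > 0, ω < ν²/(100μ⁴), z₃ - y₁y₃ ≥ ν, |y₁|,|y₂|,|y₃|,|z₁|,|z₂|,|z₃| ≤ μ. Set V = (k - a)(z₃ - y₁y₃) + b(y₁y₂ - y₂² - y₃² + z₂ - z₁) and W = (a² + b²)y₃ - k(ay₃ + by₂ - by₁). Then V ≥ 4kν/5 and |W| ≤ ν²k²/(25μ³). -/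
set_option maxHeartbeats 1000000 in
/-- Key estimate for the coefficients of the quadratic `Uρ² + Vρ + W`:
`V ≥ 4kν/5` and `|W| ≤ ν²k²/(25μ³)`. -/
theorem stmt_6 (k a b μ ν ω y₁ y₂ y₃ z₁ z₂ z₃ : ℝ)
    (hν0 : 0 < ν) (hν1 : ν < 1) (hμ : 1 ≤ μ)
    (ha : |a| < ω * k) (hb : |b| < ω * k) (hk : 0 < k)
    (hω : ω < ν ^ 2 / (100 * μ ^ 4))
    (hz : z₃ - y₁ * y₃ ≥ ν)
    (hy₁ : |y₁| ≤ μ) (hy₂ : |y₂| ≤ μ) (hy₃ : |y₃| ≤ μ)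
    (hz₁ : |z₁| ≤ μ) (hz₂ : |z₂| ≤ μ) (hz₃ : |z₃| ≤ μ) :
    (k - a) * (z₃ - y₁ * y₃) + b * (y₁ * y₂ - y₂ ^ 2 - y₃ ^ 2 + z₂ - z₁) ≥ 4 * k * ν / 5 ∧
    |(a ^ 2 + b ^ 2) * y₃ - k * (a * y₃ + b * y₂ - b * y₁)| ≤ ν ^ 2 * k ^ 2 / (25 * μ ^ 3) := by
  have hμ0 : (0:ℝ) < μ := lt_of_lt_of_le one_pos hμ
  obtain ⟨E, hEdef⟩ : ∃ E : ℝ, E = ν ^ 2 * k / (100 * μ ^ 4) := ⟨_, rfl⟩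
  have hE0 : 0 < E := by rw [hEdef]; positivity
  have haE : |a| < E := by
    refine lt_of_lt_of_le (lt_trans ha (mul_lt_mul_of_pos_right hω hk)) ?_
    rw [hEdef, div_mul_eq_mul_div]
  have hbE : |b| < E := by
    refine lt_of_lt_of_le (lt_trans hb (mul_lt_mul_of_pos_right hω hk)) ?_
    rw [hEdef, div_mul_eq_mul_div]
  have hμ2 : 1 ≤ μ ^ 2 := by nlinarith
  have hμ4 : 1 ≤ μ ^ 4 := by nlinarith
  have hν2 : ν ^ 2 ≤ 1 := by nlinarith
  have hEk : E ≤ k / 100 := by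
    rw [hEdef, div_le_div_iff₀ (by positivity) (by norm_num)]
    nlinarith [mul_le_mul_of_nonneg_left (le_trans hν2 hμ4) hk.le]
  have hEμ : E * μ ^ 2 ≤ ν * k / 100 := by
    rw [hEdef, div_mul_eq_mul_div, div_le_div_iff₀ (by positivity) (by norm_num)]
    have h5 : ν * μ ^ 2 ≤ μ ^ 4 := by nlinarith
    nlinarith [mul_le_mul_of_nonneg_left h5 (mul_pos hν0 hk).le]
  have ha' := abs_lt.mp haE
  have hb' := abs_lt.mp hbE
  have hy2 := abs_le.mp hy₂
  have hy3 := abs_le.mp hy₃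
  have hz1 := abs_le.mp hz₁
  have hz2 := abs_le.mp hz₂
  constructor
  · -- V bound
    have hS : |y₁ * y₂ - y₂ ^ 2 - y₃ ^ 2 + z₂ - z₁| ≤ 5 * μ ^ 2 := by
      have hab : |y₁ * y₂| ≤ μ ^ 2 := by
        rw [abs_mul]; calc |y₁| * |y₂| ≤ μ * μ := mul_le_mul hy₁ hy₂ (abs_nonneg _) hμ0.le
          _ = μ ^ 2 := (sq μ).symm
      have hb2 : y₂ ^ 2 ≤ μ ^ 2 := sq_le_sq' hy2.1 hy2.2
      have hb3 : y₃ ^ 2 ≤ μ ^ 2 := sq_le_sq' hy3.1 hy3.2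
      have t1 := abs_sub (y₁ * y₂ - y₂ ^ 2 - y₃ ^ 2 + z₂) z₁
      have t2 := abs_add_le (y₁ * y₂ - y₂ ^ 2 - y₃ ^ 2) z₂
      have t3 := abs_sub (y₁ * y₂ - y₂ ^ 2) (y₃ ^ 2)
      have t4 := abs_sub (y₁ * y₂) (y₂ ^ 2)
      have s2 : |y₂ ^ 2| = y₂ ^ 2 := abs_of_nonneg (sq_nonneg _)
      have s3 : |y₃ ^ 2| = y₃ ^ 2 := abs_of_nonneg (sq_nonneg _)
      rw [s2] at t4; rw [s3] at t3
      have hμμ : μ ≤ μ ^ 2 := by nlinarith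
      linarith
    have h1 : (k - E) * ν ≤ (k - a) * (z₃ - y₁ * y₃) :=
      mul_le_mul (by linarith [ha'.2]) hz hν0.le (by linarith [ha'.1, hEk])
    rw [sub_mul] at h1
    have habs : |b * (y₁ * y₂ - y₂ ^ 2 - y₃ ^ 2 + z₂ - z₁)| ≤ E * (5 * μ ^ 2) := by
      rw [abs_mul]; exact mul_le_mul hbE.le hS (abs_nonneg _) hE0.le
    have h2 := neg_abs_le (b * (y₁ * y₂ - y₂ ^ 2 - y₃ ^ 2 + z₂ - z₁))
    have hEν : E * ν ≤ E * μ ^ 2 := by nlinarith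
    linarith [mul_pos hk hν0]
  · -- W bound
    have hgoal : ν ^ 2 * k ^ 2 / (25 * μ ^ 3) = 4 * E * k * μ := by
      rw [hEdef]; field_simp; ring
    rw [hgoal]
    have h3 : |a * y₃ + b * y₂ - b * y₁| ≤ E * μ + E * μ + E * μ := by
      have u1 := abs_sub (a * y₃ + b * y₂) (b * y₁)
      have u2 := abs_add_le (a * y₃) (b * y₂)
      have v1 : |a * y₃| ≤ E * μ := by
        rw [abs_mul]; exact mul_le_mul haE.le hy₃ (abs_nonneg _) hE0.le
      have v2 : |b * y₂| ≤ E * μ := by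
        rw [abs_mul]; exact mul_le_mul hbE.le hy₂ (abs_nonneg _) hE0.le
      have v3 : |b * y₁| ≤ E * μ := by
        rw [abs_mul]; exact mul_le_mul hbE.le hy₁ (abs_nonneg _) hE0.le
      linarith
    have ha2 : a ^ 2 ≤ E ^ 2 := sq_le_sq' (by linarith [ha'.1]) ha'.2.le
    have hb2 : b ^ 2 ≤ E ^ 2 := sq_le_sq' (by linarith [hb'.1]) hb'.2.le
    have key : |(a ^ 2 + b ^ 2) * y₃ - k * (a * y₃ + b * y₂ - b * y₁)| ≤
        (E ^ 2 + E ^ 2) * μ + k * (E * μ + E * μ + E * μ) := by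
      have w1 := abs_sub ((a ^ 2 + b ^ 2) * y₃) (k * (a * y₃ + b * y₂ - b * y₁))
      have w2 : |(a ^ 2 + b ^ 2) * y₃| ≤ (E ^ 2 + E ^ 2) * μ := by
        rw [abs_mul, abs_of_nonneg (by positivity : (0:ℝ) ≤ a ^ 2 + b ^ 2)]
        exact mul_le_mul (by linarith) hy₃ (abs_nonneg _) (by positivity)
      have w3 : |k * (a * y₃ + b * y₂ - b * y₁)| ≤ k * (E * μ + E * μ + E * μ) := by
        rw [abs_mul, abs_of_pos hk]
        exact mul_le_mul_of_nonneg_left h3 hk.le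
      linarith
    refine key.trans ?_
    have : E * E ≤ E * (k / 100) := mul_le_mul_of_nonneg_left hEk hE0.le
    nlinarith [mul_le_mul_of_nonneg_right this hμ0.le, mul_pos (mul_pos hE0 hk) hμ0]
end

section
/- Continuity of the time-ordered exponential: if A₁, A₂ ∈ L¹((a,b); Mat(n×n, ℝ)) and B₁ = Texp(A₁), B₂ = Texp(A₂) are the associated fundamental solution matrices at time b (i.e. Bᵢh₀ = hᵢ(b) where hᵢ solves ḣᵢ = Aᵢhᵢ, hᵢ(a) = h₀), then ‖B₁ - B₂‖ ≤ exp(max(‖A₁‖_{L¹}, ‖A₂‖_{L¹})) · ∫_a^b ‖A₁(τ) - A₂(τ)‖ dτ. -/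
open MeasureTheory


lemma key2 (k K x : ℝ) (hk : 0 ≤ k) (hkK : k ≤ K) (hx : 0 ≤ x) :
    Real.exp x * (K * x + (K - k)) ≤ (1 + x) * (K * Real.exp x - k) := by
  nlinarith [Real.add_one_le_exp x, mul_nonneg hk (sub_nonneg.2 (Real.add_one_le_exp x))]

lemma key2' (k K y z : ℝ) (hk : 0 ≤ k) (hkK : k ≤ K) (hzy : z ≤ y) :
    Real.exp y * (K * (y - z) + (K - k)) ≤
      (1 + (y - z)) * (K * Real.exp y - k * Real.exp z) := by
  have h := key2 k K (y - z) hk hkK (sub_nonneg.2 hzy)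
  have hez : (0:ℝ) < Real.exp z := Real.exp_pos z
  have hey : Real.exp y = Real.exp z * Real.exp (y - z) := by
    rw [← Real.exp_add]; ring_nf
  rw [hey]
  calc Real.exp z * Real.exp (y - z) * (K * (y - z) + (K - k))
      = Real.exp z * (Real.exp (y - z) * (K * (y - z) + (K - k))) := by ring
    _ ≤ Real.exp z * ((1 + (y - z)) * (K * Real.exp (y - z) - k)) :=
        mul_le_mul_of_nonneg_left h hez.le
    _ = (1 + (y - z)) * (K * (Real.exp z * Real.exp (y - z)) - k * Real.exp z) := by ring

lemma lemP (a b : ℝ) (hab : a ≤ b) (φ M Q : ℝ → ℝ)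
    (hφ : IntervalIntegrable φ volume a b)
    (hMc : ContinuousOn M (Set.Icc a b))
    (hQ : MonotoneOn Q (Set.Icc a b))
    (key : ∀ s t, a ≤ s → s ≤ t → t ≤ b →
      (∫ u in s..t, φ u) ≤ (1 + (M t - M s)) * (Q t - Q s)) :
    (∫ u in a..b, φ u) ≤ Q b - Q a := by
  have hQab : 0 ≤ Q b - Q a :=
    sub_nonneg.2 (hQ ⟨le_rfl, hab⟩ ⟨hab, le_rfl⟩ hab)
  refine le_of_forall_pos_le_add fun ε hε => ?_
  set ε' : ℝ := ε / (Q b - Q a + 1) with hε'def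
  have hε' : 0 < ε' := div_pos hε (by linarith)
  -- uniform continuity of M on Icc a b
  have hUC : UniformContinuousOn M (Set.Icc a b) :=
    isCompact_Icc.uniformContinuousOn_of_continuous hMc
  rw [Metric.uniformContinuousOn_iff_le] at hUC
  obtain ⟨δ, hδ, hMδ⟩ := hUC ε' hε'
  obtain ⟨N, hN⟩ := exists_nat_gt ((b - a) / δ)
  have hba : 0 ≤ b - a := by linarith
  have hNpos : 0 < (N:ℝ) := lt_of_le_of_lt (div_nonneg hba hδ.le) hN
  set h : ℝ := (b - a) / N with hhdef
  have hh0 : 0 ≤ h := div_nonneg hba hNpos.le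
  have hhδ : h ≤ δ := by
    rw [hhdef, div_le_iff₀ hNpos]
    calc b - a = ((b-a)/δ) * δ := by field_simp
      _ ≤ N * δ := by
          have := hN.le
          exact mul_le_mul_of_nonneg_right this hδ.le
      _ = δ * N := by ring
  set t : ℕ → ℝ := fun k => a + k * h with htdef
  have ht0 : t 0 = a := by simp [htdef]
  have htN : t N = b := by
    simp only [htdef, hhdef]
    field_simp
    ring
  have htmem : ∀ k : ℕ, k ≤ N → t k ∈ Set.Icc a b := by
    intro k hk
    constructor
    · simp only [htdef]
      nlinarith [mul_nonneg (Nat.cast_nonneg (α := ℝ) k) hh0]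
    · simp only [htdef]
      have : (k:ℝ) * h ≤ N * h :=
        mul_le_mul_of_nonneg_right (Nat.cast_le.2 hk) hh0
      have hNh : (N:ℝ) * h = b - a := by
        rw [hhdef]; field_simp
      linarith
  have htstep : ∀ k : ℕ, t (k+1) - t k = h := by
    intro k; simp only [htdef]; push_cast; ring
  have htle : ∀ k : ℕ, t k ≤ t (k+1) := by
    intro k; have := htstep k; linarith
  have hsum : ∑ k ∈ Finset.range N, ∫ u in t k..t (k+1), φ u = ∫ u in a..b, φ u := by
    rw [← ht0, ← htN]
    apply intervalIntegral.sum_integral_adjacent_intervals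
    intro k hk
    apply hφ.mono_set
    rw [Set.uIcc_of_le (htle k), Set.uIcc_of_le hab]
    exact Set.Icc_subset_Icc (htmem k (le_of_lt hk)).1 (htmem (k+1) hk).2
  have hbound : ∀ k ∈ Finset.range N,
      (∫ u in t k..t (k+1), φ u) ≤ (1 + ε') * (Q (t (k+1)) - Q (t k)) := by
    intro k hk
    rw [Finset.mem_range] at hk
    have hk1 : t k ∈ Set.Icc a b := htmem k hk.le
    have hk2 : t (k+1) ∈ Set.Icc a b := htmem (k+1) hk
    have hQk : 0 ≤ Q (t (k+1)) - Q (t k) := sub_nonneg.2 (hQ hk1 hk2 (htle k))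
    have hMk : M (t (k+1)) - M (t k) ≤ ε' := by
      have hd : dist (t (k+1)) (t k) ≤ δ := by
        rw [Real.dist_eq, htstep k, abs_of_nonneg hh0]; exact hhδ
      have := hMδ (t (k+1)) hk2 (t k) hk1 hd
      rw [Real.dist_eq] at this
      calc M (t (k+1)) - M (t k) ≤ |M (t (k+1)) - M (t k)| := le_abs_self _
        _ ≤ ε' := this
    calc (∫ u in t k..t (k+1), φ u)
        ≤ (1 + (M (t (k+1)) - M (t k))) * (Q (t (k+1)) - Q (t k)) :=
          key _ _ hk1.1 (htle k) hk2.2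
      _ ≤ (1 + ε') * (Q (t (k+1)) - Q (t k)) := by
          apply mul_le_mul_of_nonneg_right _ hQk
          linarith
  have hsum2 : ∑ k ∈ Finset.range N, (1 + ε') * (Q (t (k+1)) - Q (t k))
      = (1 + ε') * (Q b - Q a) := by
    rw [← Finset.mul_sum, Finset.sum_range_sub (fun k => Q (t k)), ht0, htN]
  have := Finset.sum_le_sum hbound
  rw [hsum, hsum2] at this
  have hfin : ε' * (Q b - Q a) ≤ ε := by
    have h1 : ε' * (Q b - Q a + 1) = ε := by
      rw [hε'def]; field_simp
    nlinarith
  nlinarith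

lemma firstCross (a b : ℝ) (hab : a ≤ b) (u V : ℝ → ℝ)
    (hu : ContinuousOn u (Set.Icc a b)) (hV : ContinuousOn V (Set.Icc a b))
    (h0 : u a < V a)
    (step : ∀ t ∈ Set.Icc a b, (∀ s ∈ Set.Icc a t, u s ≤ V s) → u t < V t) :
    ∀ t ∈ Set.Icc a b, u t < V t := by
  by_contra hcon
  push_neg at hcon
  obtain ⟨t₀, ht₀, ht₀'⟩ := hcon
  set S : Set ℝ := {t ∈ Set.Icc a b | V t ≤ u t} with hSdef
  have hSne : S.Nonempty := ⟨t₀, ht₀, ht₀'⟩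
  have hSbdd : BddBelow S := ⟨a, fun s hs => hs.1.1⟩
  have hSclosed : IsClosed S := by
    have : S = Set.Icc a b ∩ (fun t => u t - V t) ⁻¹' Set.Ici 0 := by
      ext s
      simp only [hSdef, Set.mem_setOf_eq, Set.mem_inter_iff, Set.mem_preimage,
        Set.mem_Ici, sub_nonneg]
    rw [this]
    exact ContinuousOn.preimage_isClosed_of_isClosed (hu.sub hV) isClosed_Icc isClosed_Ici
  set c := sInf S with hcdef
  have hcS : c ∈ S := hSclosed.csInf_mem hSne hSbdd
  have hcIcc : c ∈ Set.Icc a b := hcS.1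
  have hac : a < c := by
    rcases lt_or_eq_of_le hcIcc.1 with h | h
    · exact h
    · exfalso; rw [← h] at hcS; exact absurd hcS.2 (not_le.2 h0)
  have hlt : ∀ s ∈ Set.Ico a c, u s < V s := by
    intro s hs
    by_contra hcon2
    push_neg at hcon2
    have hsS : s ∈ S := ⟨⟨hs.1, hs.2.le.trans hcIcc.2⟩, hcon2⟩
    exact absurd (csInf_le hSbdd hsS) (not_le.2 hs.2)
  -- limit: u c ≤ V c
  have hucVc : u c ≤ V c := by
    have hne : (Set.Ico a c).Nonempty := ⟨a, le_rfl, hac⟩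
    have hmem : c ∈ closure (Set.Ico a c) := by
      rw [closure_Ico hac.ne]
      exact ⟨hac.le, le_rfl⟩
    have hNB : (nhdsWithin c (Set.Ico a c)).NeBot :=
      mem_closure_iff_nhdsWithin_neBot.1 hmem
    have hsub : Set.Ico a c ⊆ Set.Icc a b :=
      fun s hs => ⟨hs.1, hs.2.le.trans hcIcc.2⟩
    have hu' : Filter.Tendsto u (nhdsWithin c (Set.Ico a c)) (nhds (u c)) :=
      (hu c hcIcc).mono_left (nhdsWithin_mono c hsub)
    have hV' : Filter.Tendsto V (nhdsWithin c (Set.Ico a c)) (nhds (V c)) :=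
      (hV c hcIcc).mono_left (nhdsWithin_mono c hsub)
    refine le_of_tendsto_of_tendsto hu' hV' ?_
    filter_upwards [self_mem_nhdsWithin] with s hs
    exact (hlt s hs).le
  have hall : ∀ s ∈ Set.Icc a c, u s ≤ V s := by
    intro s hs
    rcases lt_or_eq_of_le hs.2 with h | h
    · exact (hlt s ⟨hs.1, h⟩).le
    · rw [h]; exact hucVc
  exact absurd hcS.2 (not_le.2 (step c hcIcc hall))


variable {E : Type*} [NormedAddCommGroup E] [NormedSpace ℝ E] [CompleteSpace E]

lemma subInt {F : Type*} [NormedAddCommGroup F] {a b s t : ℝ} {f : ℝ → F} (hf : IntervalIntegrable f volume a b)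
    (has : a ≤ s) (hst : s ≤ t) (htb : t ≤ b) : IntervalIntegrable f volume s t := by
  apply hf.mono_set
  rw [Set.uIcc_of_le hst, Set.uIcc_of_le (has.trans (hst.trans htb))]
  exact Set.Icc_subset_Icc has htb

lemma primCont {a b : ℝ} (hab : a ≤ b) {f : ℝ → ℝ} (hf : IntervalIntegrable f volume a b) :
    ContinuousOn (fun t => ∫ s in a..t, f s) (Set.Icc a b) := by
  have h := intervalIntegral.continuousOn_primitive_interval' hf
    (by rw [Set.uIcc_of_le hab]; exact ⟨le_rfl, hab⟩)
  rwa [Set.uIcc_of_le hab] at h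

lemma primDiff {a b s t : ℝ} {f : ℝ → ℝ} (hf : IntervalIntegrable f volume a b)
    (has : a ≤ s) (hst : s ≤ t) (htb : t ≤ b) :
    (∫ τ in a..t, f τ) - (∫ τ in a..s, f τ) = ∫ τ in s..t, f τ :=
  intervalIntegral.integral_interval_sub_left
    (subInt hf le_rfl (has.trans hst) htb) (subInt hf le_rfl has (hst.trans htb))

lemma primMono {a b : ℝ} (hab : a ≤ b) {f : ℝ → ℝ} (hf : IntervalIntegrable f volume a b)
    (hf0 : ∀ u ∈ Set.Icc a b, 0 ≤ f u) :
    MonotoneOn (fun t => ∫ s in a..t, f s) (Set.Icc a b) := by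
  intro s hs t ht hst
  have h := primDiff hf hs.1 hst ht.2
  have h2 : 0 ≤ ∫ τ in s..t, f τ :=
    intervalIntegral.integral_nonneg hst (fun u hu => hf0 u ⟨hs.1.trans hu.1, hu.2.trans ht.2⟩)
  linarith

lemma appInt {a b : ℝ} (hab : a ≤ b) (A : ℝ → E →L[ℝ] E) (hA : IntervalIntegrable A volume a b)
    (h : ℝ → E) (hc : ContinuousOn h (Set.Icc a b)) :
    IntervalIntegrable (fun s => A s (h s)) volume a b := by
  obtain ⟨C, hC⟩ := isCompact_Icc.exists_bound_of_continuousOn hc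
  rw [intervalIntegrable_iff_integrableOn_Ioc_of_le hab] at hA ⊢
  have hmeas : AEStronglyMeasurable (fun s => A s (h s)) (volume.restrict (Set.Ioc a b)) := by
    have h1 : AEStronglyMeasurable A (volume.restrict (Set.Ioc a b)) := hA.aestronglyMeasurable
    have h2 : AEStronglyMeasurable h (volume.restrict (Set.Ioc a b)) :=
      (hc.mono Set.Ioc_subset_Icc_self).aestronglyMeasurable measurableSet_Ioc
    exact isBoundedBilinearMap_apply.continuous.comp_aestronglyMeasurable (h1.prodMk h2)
  refine Integrable.mono' (hA.norm.mul_const C) hmeas ?_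
  filter_upwards [ae_restrict_mem measurableSet_Ioc] with s hs
  calc ‖A s (h s)‖ ≤ ‖A s‖ * ‖h s‖ := (A s).le_opNorm (h s)
    _ ≤ ‖A s‖ * C := mul_le_mul_of_nonneg_left (hC s (Set.Ioc_subset_Icc_self hs))
        (norm_nonneg _)

lemma apriori {a b : ℝ} (hab : a ≤ b) (A : ℝ → E →L[ℝ] E)
    (hA : IntervalIntegrable A volume a b)
    (h₀ : E) (h : ℝ → E) (hc : ContinuousOn h (Set.Icc a b))
    (heq : ∀ t ∈ Set.Icc a b, h t = h₀ + ∫ τ in a..t, A τ (h τ)) :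
    ∀ t ∈ Set.Icc a b, ‖h t‖ ≤ ‖h₀‖ * Real.exp (∫ τ in a..t, ‖A τ‖) := by
  set c : ℝ → ℝ := fun t => ∫ τ in a..t, ‖A τ‖ with hcdef
  have hAn : IntervalIntegrable (fun τ => ‖A τ‖) volume a b := hA.norm
  have hcc : ContinuousOn c (Set.Icc a b) := primCont hab hAn
  have hcmono : MonotoneOn c (Set.Icc a b) :=
    primMono hab hAn (fun u _ => norm_nonneg _)
  have hca : c a = 0 := intervalIntegral.integral_same
  have happ := appInt hab A hA h hc
  have main : ∀ ε : ℝ, 0 < ε → ∀ t ∈ Set.Icc a b,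
      ‖h t‖ < (‖h₀‖ + ε) * Real.exp (c t) := by
    intro ε hε
    have hVc : ContinuousOn (fun t => (‖h₀‖ + ε) * Real.exp (c t)) (Set.Icc a b) :=
      continuousOn_const.mul (Real.continuous_exp.comp_continuousOn hcc)
    refine firstCross a b hab _ _ hc.norm hVc ?_ ?_
    · have := heq a ⟨le_rfl, hab⟩
      rw [intervalIntegral.integral_same, add_zero] at this
      rw [this, hca, Real.exp_zero, mul_one]
      linarith
    · intro t ht hs
      have hVpos : ∀ s ∈ Set.Icc a b, 0 ≤ (‖h₀‖ + ε) * Real.exp (c s) :=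
        fun s _ => mul_nonneg (by positivity) (Real.exp_pos _).le
      have happt : IntervalIntegrable (fun s => A s (h s)) volume a t :=
        subInt happ le_rfl ht.1 ht.2
      have h1 : ‖h t‖ ≤ ‖h₀‖ + ∫ s in a..t, ‖A s (h s)‖ := by
        rw [heq t ht]
        refine (norm_add_le _ _).trans ?_
        exact add_le_add_right (intervalIntegral.norm_integral_le_integral_norm ht.1) _
      have hint2 : IntervalIntegrable (fun s => ‖A s‖ * ((‖h₀‖ + ε) * Real.exp (c s)))
          volume a t := by
        apply IntervalIntegrable.mul_continuousOn (subInt hAn le_rfl ht.1 ht.2)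
        rw [Set.uIcc_of_le ht.1]
        exact hVc.mono (Set.Icc_subset_Icc le_rfl ht.2)
      have h2 : (∫ s in a..t, ‖A s (h s)‖) ≤
          ∫ s in a..t, ‖A s‖ * ((‖h₀‖ + ε) * Real.exp (c s)) := by
        apply intervalIntegral.integral_mono_on ht.1 happt.norm hint2
        intro s hs'
        calc ‖A s (h s)‖ ≤ ‖A s‖ * ‖h s‖ := (A s).le_opNorm (h s)
          _ ≤ ‖A s‖ * ((‖h₀‖ + ε) * Real.exp (c s)) :=
            mul_le_mul_of_nonneg_left (hs s hs') (norm_nonneg _)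
      have h3 : (∫ s in a..t, ‖A s‖ * ((‖h₀‖ + ε) * Real.exp (c s))) =
          (‖h₀‖ + ε) * ∫ s in a..t, ‖A s‖ * Real.exp (c s) := by
        rw [← intervalIntegral.integral_const_mul]
        congr 1; funext s; ring
      have h4 : (∫ s in a..t, ‖A s‖ * Real.exp (c s)) ≤
          Real.exp (c t) - Real.exp (c a) := by
        apply lemP a t ht.1 _ c (fun s => Real.exp (c s))
        · exact IntervalIntegrable.mul_continuousOn (subInt hAn le_rfl ht.1 ht.2)
            (by rw [Set.uIcc_of_le ht.1]
                exact (Real.continuous_exp.comp_continuousOn hcc).mono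
                  (Set.Icc_subset_Icc le_rfl ht.2))
        · exact hcc.mono (Set.Icc_subset_Icc le_rfl ht.2)
        · intro x hx y hy hxy
          exact Real.exp_le_exp.2 (hcmono ⟨hx.1, hx.2.trans ht.2⟩ ⟨hy.1, hy.2.trans ht.2⟩ hxy)
        · intro s' t' has' hst' ht't
          have hs'I : s' ∈ Set.Icc a b := ⟨has', hst'.trans (ht't.trans ht.2)⟩
          have ht'I : t' ∈ Set.Icc a b := ⟨has'.trans hst', ht't.trans ht.2⟩
          have hchain : (∫ u in s'..t', ‖A u‖ * Real.exp (c u)) ≤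
              Real.exp (c t') * (c t' - c s') := by
            have hmono' : (∫ u in s'..t', ‖A u‖ * Real.exp (c u)) ≤
                ∫ u in s'..t', ‖A u‖ * Real.exp (c t') := by
              apply intervalIntegral.integral_mono_on hst'
              · exact IntervalIntegrable.mul_continuousOn (subInt hAn has' hst' ht'I.2)
                  (by rw [Set.uIcc_of_le hst']
                      exact (Real.continuous_exp.comp_continuousOn hcc).mono
                        (Set.Icc_subset_Icc has' ht'I.2))
              · exact (subInt hAn has' hst' ht'I.2).mul_const _
              · intro u hu
                exact mul_le_mul_of_nonneg_left
                  (Real.exp_le_exp.2 (hcmono ⟨has'.trans hu.1, hu.2.trans ht'I.2⟩ ht'I hu.2))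
                  (norm_nonneg _)
            have heval : (∫ u in s'..t', ‖A u‖ * Real.exp (c t')) =
                Real.exp (c t') * (c t' - c s') := by
              rw [intervalIntegral.integral_mul_const]
              rw [primDiff hAn has' hst' ht'I.2]
              ring
            linarith
          have hkey := key2' 1 1 (c t') (c s') zero_le_one le_rfl
            (hcmono hs'I ht'I hst')
          calc (∫ u in s'..t', ‖A u‖ * Real.exp (c u)) ≤
              Real.exp (c t') * (c t' - c s') := hchain
            _ = Real.exp (c t') * (1 * (c t' - c s') + (1 - 1)) := by ring
            _ ≤ (1 + (c t' - c s')) * (1 * Real.exp (c t') - 1 * Real.exp (c s')) := hkey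
            _ = (1 + (c t' - c s')) * (Real.exp (c t') - Real.exp (c s')) := by ring
      rw [hca, Real.exp_zero] at h4
      have hexp1 : (1:ℝ) ≤ Real.exp (c t) := by
        rw [← Real.exp_zero]
        exact Real.exp_le_exp.2 (by rw [← hca]; exact hcmono ⟨le_rfl, hab⟩ ht ht.1)
      have hmul := mul_le_mul_of_nonneg_left h4 (by positivity : (0:ℝ) ≤ ‖h₀‖ + ε)
      nlinarith [Real.exp_pos (c t)]
  intro t ht
  refine le_of_forall_pos_le_add fun ε' hε' => ?_
  have hεp : 0 < ε' / Real.exp (c t) := div_pos hε' (Real.exp_pos _)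
  have hm := (main _ hεp t ht).le
  have hcalc : (‖h₀‖ + ε' / Real.exp (c t)) * Real.exp (c t) =
      ‖h₀‖ * Real.exp (c t) + ε' := by
    field_simp
  linarith [hm.trans_eq hcalc]

/-- Continuity of the time-ordered exponential: if `B₁, B₂` are the solution operators
(from time `a` to time `b`) of the linear ODEs `ḣ = A₁(t)h` and `ḣ = A₂(t)h`
(equivalently, `Bᵢ h₀ = hᵢ(b)` where `hᵢ` solves the integral equation with data `h₀`), then
`‖B₁ - B₂‖ ≤ exp(max(‖A₁‖_{L¹}, ‖A₂‖_{L¹})) · ∫_a^b ‖A₁(τ) - A₂(τ)‖ dτ`. -/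
theorem stmt_10 (n : ℕ) (a b : ℝ) (hab : a ≤ b)
    (A₁ A₂ : ℝ → (EuclideanSpace ℝ (Fin n) →L[ℝ] EuclideanSpace ℝ (Fin n)))
    (hA₁ : IntervalIntegrable A₁ volume a b)
    (hA₂ : IntervalIntegrable A₂ volume a b)
    (B₁ B₂ : EuclideanSpace ℝ (Fin n) →L[ℝ] EuclideanSpace ℝ (Fin n))
    (hB₁ : ∀ h₀ : EuclideanSpace ℝ (Fin n), ∃ h : ℝ → EuclideanSpace ℝ (Fin n),
        ContinuousOn h (Set.Icc a b) ∧
        (∀ t ∈ Set.Icc a b, h t = h₀ + ∫ τ in a..t, (A₁ τ) (h τ)) ∧ B₁ h₀ = h b)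
    (hB₂ : ∀ h₀ : EuclideanSpace ℝ (Fin n), ∃ h : ℝ → EuclideanSpace ℝ (Fin n),
        ContinuousOn h (Set.Icc a b) ∧
        (∀ t ∈ Set.Icc a b, h t = h₀ + ∫ τ in a..t, (A₂ τ) (h τ)) ∧ B₂ h₀ = h b) :
    ‖B₁ - B₂‖ ≤
      Real.exp (max (∫ τ in a..b, ‖A₁ τ‖) (∫ τ in a..b, ‖A₂ τ‖)) *
        ∫ τ in a..b, ‖A₁ τ - A₂ τ‖ := by
  -- notation
  have hn₁ : IntervalIntegrable (fun s => ‖A₁ s‖) volume a b := hA₁.norm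
  have hn₂ : IntervalIntegrable (fun s => ‖A₂ s‖) volume a b := hA₂.norm
  have hdd : IntervalIntegrable (fun s => ‖A₁ s - A₂ s‖) volume a b := (hA₁.sub hA₂).norm
  have hmm : IntervalIntegrable (fun s => min ‖A₁ s‖ ‖A₂ s‖) volume a b := by
    rw [intervalIntegrable_iff_integrableOn_Ioc_of_le hab] at hn₁ hn₂ ⊢
    exact hn₁.inf hn₂
  set c₁ : ℝ → ℝ := fun t => ∫ τ in a..t, ‖A₁ τ‖ with hc₁def
  set c₂ : ℝ → ℝ := fun t => ∫ τ in a..t, ‖A₂ τ‖ with hc₂def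
  set M : ℝ → ℝ := fun t => max (c₁ t) (c₂ t) with hMdef
  set D : ℝ → ℝ := fun t => ∫ τ in a..t, ‖A₁ τ - A₂ τ‖ with hDdef
  have hc₁c : ContinuousOn c₁ (Set.Icc a b) := primCont hab hn₁
  have hc₂c : ContinuousOn c₂ (Set.Icc a b) := primCont hab hn₂
  have hc₁m : MonotoneOn c₁ (Set.Icc a b) := primMono hab hn₁ (fun u _ => norm_nonneg _)
  have hc₂m : MonotoneOn c₂ (Set.Icc a b) := primMono hab hn₂ (fun u _ => norm_nonneg _)
  have hMc : ContinuousOn M (Set.Icc a b) :=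
    ContinuousOn.sup hc₁c hc₂c
  have hMm : MonotoneOn M (Set.Icc a b) :=
    fun x hx y hy hxy => max_le_max (hc₁m hx hy hxy) (hc₂m hx hy hxy)
  have hDc : ContinuousOn D (Set.Icc a b) := primCont hab hdd
  have hDm : MonotoneOn D (Set.Icc a b) := primMono hab hdd (fun u _ => norm_nonneg _)
  have hMa : M a = 0 := by
    simp only [hMdef, hc₁def, hc₂def, intervalIntegral.integral_same, max_self]
  have hDa : D a = 0 := by simp only [hDdef, intervalIntegral.integral_same]
  have hD0 : ∀ s ∈ Set.Icc a b, 0 ≤ D s := by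
    intro s hs
    rw [← hDa]
    exact hDm ⟨le_rfl, hab⟩ hs hs.1
  have hM0 : ∀ s ∈ Set.Icc a b, 0 ≤ M s := by
    intro s hs
    rw [← hMa]
    exact hMm ⟨le_rfl, hab⟩ hs hs.1
  -- min-integral bound
  have hmmM : ∀ s' t', a ≤ s' → s' ≤ t' → t' ≤ b →
      (∫ u in s'..t', min ‖A₁ u‖ ‖A₂ u‖) ≤ M t' - M s' := by
    intro s' t' h1 h2 h3
    rcases le_total (c₁ s') (c₂ s') with hcase | hcase
    · have hMs : M s' = c₂ s' := max_eq_right hcase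
      have hle : (∫ u in s'..t', min ‖A₁ u‖ ‖A₂ u‖) ≤ ∫ u in s'..t', ‖A₂ u‖ :=
        intervalIntegral.integral_mono_on h2 (subInt hmm h1 h2 h3) (subInt hn₂ h1 h2 h3)
          (fun u _ => min_le_right _ _)
      have h5 : c₂ t' - c₂ s' = ∫ u in s'..t', ‖A₂ u‖ := primDiff hn₂ h1 h2 h3
      have h6 : c₂ t' ≤ M t' := le_max_right _ _
      linarith
    · have hMs : M s' = c₁ s' := max_eq_left hcase
      have hle : (∫ u in s'..t', min ‖A₁ u‖ ‖A₂ u‖) ≤ ∫ u in s'..t', ‖A₁ u‖ :=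
        intervalIntegral.integral_mono_on h2 (subInt hmm h1 h2 h3) (subInt hn₁ h1 h2 h3)
          (fun u _ => min_le_left _ _)
      have h5 : c₁ t' - c₁ s' = ∫ u in s'..t', ‖A₁ u‖ := primDiff hn₁ h1 h2 h3
      have h6 : c₁ t' ≤ M t' := le_max_left _ _
      linarith
  -- final RHS nonneg
  have hDb0 : 0 ≤ D b := hD0 b ⟨hab, le_rfl⟩
  refine ContinuousLinearMap.opNorm_le_bound _
    (mul_nonneg (Real.exp_pos _).le hDb0) (fun h₀ => ?_)
  obtain ⟨h₁, hh₁c, heq₁, hb₁⟩ := hB₁ h₀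
  obtain ⟨h₂, hh₂c, heq₂, hb₂⟩ := hB₂ h₀
  have apri₁ := apriori hab A₁ hA₁ h₀ h₁ hh₁c heq₁
  have apri₂ := apriori hab A₂ hA₂ h₀ h₂ hh₂c heq₂
  have happ₁ := appInt hab A₁ hA₁ h₁ hh₁c
  have happ₂ := appInt hab A₂ hA₂ h₂ hh₂c
  -- pointwise bound on the integrand
  have hpt : ∀ s ∈ Set.Icc a b, ‖A₁ s (h₁ s) - A₂ s (h₂ s)‖ ≤
      min ‖A₁ s‖ ‖A₂ s‖ * ‖h₁ s - h₂ s‖ + ‖A₁ s - A₂ s‖ * (‖h₀‖ * Real.exp (M s)) := by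
    intro s hs
    have hb₁' : ‖h₁ s‖ ≤ ‖h₀‖ * Real.exp (M s) :=
      (apri₁ s hs).trans (mul_le_mul_of_nonneg_left
        (Real.exp_le_exp.2 (le_max_left _ _)) (norm_nonneg _))
    have hb₂' : ‖h₂ s‖ ≤ ‖h₀‖ * Real.exp (M s) :=
      (apri₂ s hs).trans (mul_le_mul_of_nonneg_left
        (Real.exp_le_exp.2 (le_max_right _ _)) (norm_nonneg _))
    rcases le_total ‖A₁ s‖ ‖A₂ s‖ with hle | hle
    · have hdecomp : A₁ s (h₁ s) - A₂ s (h₂ s) =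
          A₁ s (h₁ s - h₂ s) + (A₁ s - A₂ s) (h₂ s) := by
        simp only [map_sub, ContinuousLinearMap.sub_apply]; abel
      rw [hdecomp, min_eq_left hle]
      calc ‖A₁ s (h₁ s - h₂ s) + (A₁ s - A₂ s) (h₂ s)‖
          ≤ ‖A₁ s (h₁ s - h₂ s)‖ + ‖(A₁ s - A₂ s) (h₂ s)‖ := norm_add_le _ _
        _ ≤ ‖A₁ s‖ * ‖h₁ s - h₂ s‖ + ‖A₁ s - A₂ s‖ * ‖h₂ s‖ :=
            add_le_add ((A₁ s).le_opNorm _) ((A₁ s - A₂ s).le_opNorm _)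
        _ ≤ ‖A₁ s‖ * ‖h₁ s - h₂ s‖ + ‖A₁ s - A₂ s‖ * (‖h₀‖ * Real.exp (M s)) :=
            add_le_add_right (mul_le_mul_of_nonneg_left hb₂' (norm_nonneg _)) _
    · have hdecomp : A₁ s (h₁ s) - A₂ s (h₂ s) =
          A₂ s (h₁ s - h₂ s) + (A₁ s - A₂ s) (h₁ s) := by
        simp only [map_sub, ContinuousLinearMap.sub_apply]; abel
      rw [hdecomp, min_eq_right hle]
      calc ‖A₂ s (h₁ s - h₂ s) + (A₁ s - A₂ s) (h₁ s)‖
          ≤ ‖A₂ s (h₁ s - h₂ s)‖ + ‖(A₁ s - A₂ s) (h₁ s)‖ := norm_add_le _ _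
        _ ≤ ‖A₂ s‖ * ‖h₁ s - h₂ s‖ + ‖A₁ s - A₂ s‖ * ‖h₁ s‖ :=
            add_le_add ((A₂ s).le_opNorm _) ((A₁ s - A₂ s).le_opNorm _)
        _ ≤ ‖A₂ s‖ * ‖h₁ s - h₂ s‖ + ‖A₁ s - A₂ s‖ * (‖h₀‖ * Real.exp (M s)) :=
            add_le_add_right (mul_le_mul_of_nonneg_left hb₁' (norm_nonneg _)) _
  -- main Gronwall estimate
  have main : ∀ ε : ℝ, 0 < ε → ∀ t ∈ Set.Icc a b,
      ‖h₁ t - h₂ t‖ < (ε + ‖h₀‖ * D t) * Real.exp (M t) := by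
    intro ε hε
    have hVc : ContinuousOn (fun t => (ε + ‖h₀‖ * D t) * Real.exp (M t)) (Set.Icc a b) :=
      (continuousOn_const.add (continuousOn_const.mul hDc)).mul
        (Real.continuous_exp.comp_continuousOn hMc)
    refine firstCross a b hab _ _ (hh₁c.sub hh₂c).norm hVc ?_ ?_
    · have e₁ : h₁ a = h₀ := by
        have := heq₁ a ⟨le_rfl, hab⟩
        rwa [intervalIntegral.integral_same, add_zero] at this
      have e₂ : h₂ a = h₀ := by
        have := heq₂ a ⟨le_rfl, hab⟩
        rwa [intervalIntegral.integral_same, add_zero] at this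
      rw [e₁, e₂, sub_self, norm_zero, hMa, hDa, Real.exp_zero]
      simpa using hε
    · intro t ht hs
      set φ : ℝ → ℝ := fun s =>
        (min ‖A₁ s‖ ‖A₂ s‖ * (ε + ‖h₀‖ * D s) + ‖A₁ s - A₂ s‖ * ‖h₀‖) * Real.exp (M s)
        with hφdef
      have hQm : MonotoneOn (fun s => (ε + ‖h₀‖ * D s) * Real.exp (M s)) (Set.Icc a b) := by
        intro x hx y hy hxy
        have h1 : 0 ≤ ε + ‖h₀‖ * D x := by
          have := mul_nonneg (norm_nonneg h₀) (hD0 x hx); linarith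
        apply mul_le_mul
        · exact add_le_add_right (mul_le_mul_of_nonneg_left (hDm hx hy hxy) (norm_nonneg _)) _
        · exact Real.exp_le_exp.2 (hMm hx hy hxy)
        · exact (Real.exp_pos _).le
        · have := mul_nonneg (norm_nonneg h₀) (hD0 y hy); linarith
      have hφint : IntervalIntegrable φ volume a b := by
        apply IntervalIntegrable.mul_continuousOn
        · exact (hmm.mul_continuousOn (by
              rw [Set.uIcc_of_le hab]
              exact continuousOn_const.add (continuousOn_const.mul hDc))).add
            (hdd.mul_const ‖h₀‖)
        · rw [Set.uIcc_of_le hab]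
          exact Real.continuous_exp.comp_continuousOn hMc
      -- step 1: norm of the difference
      have hsub₁ : IntervalIntegrable (fun s => A₁ s (h₁ s)) volume a t :=
        subInt happ₁ le_rfl ht.1 ht.2
      have hsub₂ : IntervalIntegrable (fun s => A₂ s (h₂ s)) volume a t :=
        subInt happ₂ le_rfl ht.1 ht.2
      have e1 : h₁ t - h₂ t = ∫ s in a..t, (A₁ s (h₁ s) - A₂ s (h₂ s)) := by
        rw [heq₁ t ht, heq₂ t ht, intervalIntegral.integral_sub hsub₁ hsub₂]
        abel
      have h1 : ‖h₁ t - h₂ t‖ ≤ ∫ s in a..t, ‖A₁ s (h₁ s) - A₂ s (h₂ s)‖ := by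
        rw [e1]
        exact intervalIntegral.norm_integral_le_integral_norm ht.1
      have h2 : (∫ s in a..t, ‖A₁ s (h₁ s) - A₂ s (h₂ s)‖) ≤ ∫ s in a..t, φ s := by
        apply intervalIntegral.integral_mono_on ht.1 (hsub₁.sub hsub₂).norm
          (subInt hφint le_rfl ht.1 ht.2)
        intro s hs'
        have hsIcc : s ∈ Set.Icc a b := ⟨hs'.1, hs'.2.trans ht.2⟩
        have hmm0 : 0 ≤ min ‖A₁ s‖ ‖A₂ s‖ := le_min (norm_nonneg _) (norm_nonneg _)
        calc ‖A₁ s (h₁ s) - A₂ s (h₂ s)‖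
            ≤ min ‖A₁ s‖ ‖A₂ s‖ * ‖h₁ s - h₂ s‖ +
              ‖A₁ s - A₂ s‖ * (‖h₀‖ * Real.exp (M s)) := hpt s hsIcc
          _ ≤ min ‖A₁ s‖ ‖A₂ s‖ * ((ε + ‖h₀‖ * D s) * Real.exp (M s)) +
              ‖A₁ s - A₂ s‖ * (‖h₀‖ * Real.exp (M s)) :=
              add_le_add_left (mul_le_mul_of_nonneg_left (hs s hs') hmm0) _
          _ = φ s := by rw [hφdef]; ring
      -- step 2: lemP
      have h3 : (∫ s in a..t, φ s) ≤
          (ε + ‖h₀‖ * D t) * Real.exp (M t) - (ε + ‖h₀‖ * D a) * Real.exp (M a) := by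
        apply lemP a t ht.1 φ M (fun s => (ε + ‖h₀‖ * D s) * Real.exp (M s))
          (subInt hφint le_rfl ht.1 ht.2)
          (hMc.mono (Set.Icc_subset_Icc le_rfl ht.2))
          (hQm.mono (Set.Icc_subset_Icc le_rfl ht.2))
        intro s' t' h1' h2' h3'
        have ht'b : t' ≤ b := h3'.trans ht.2
        have hs'Icc : s' ∈ Set.Icc a b := ⟨h1', h2'.trans ht'b⟩
        have ht'Icc : t' ∈ Set.Icc a b := ⟨h1'.trans h2', ht'b⟩
        set K : ℝ := ε + ‖h₀‖ * D t' with hKdef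
        set k : ℝ := ε + ‖h₀‖ * D s' with hkdef
        have hk0 : 0 ≤ k := by
          have := mul_nonneg (norm_nonneg h₀) (hD0 s' hs'Icc); rw [hkdef]; linarith
        have hkK : k ≤ K := by
          rw [hkdef, hKdef]
          exact add_le_add_right
            (mul_le_mul_of_nonneg_left (hDm hs'Icc ht'Icc h2') (norm_nonneg _)) _
        have hK0 : 0 ≤ K := hk0.trans hkK
        -- pointwise bound of φ on [s', t']
        have hmono1 : (∫ u in s'..t', φ u) ≤
            ∫ u in s'..t', (min ‖A₁ u‖ ‖A₂ u‖ * K + ‖A₁ u - A₂ u‖ * ‖h₀‖) *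
              Real.exp (M t') := by
          apply intervalIntegral.integral_mono_on h2'
            (subInt hφint h1' h2' ht'b)
            (((subInt hmm h1' h2' ht'b).mul_const K |>.add
              ((subInt hdd h1' h2' ht'b).mul_const ‖h₀‖)).mul_const _)
          intro u hu
          have huIcc : u ∈ Set.Icc a b := ⟨h1'.trans hu.1, hu.2.trans ht'b⟩
          have hmm0 : 0 ≤ min ‖A₁ u‖ ‖A₂ u‖ := le_min (norm_nonneg _) (norm_nonneg _)
          have hf1 : min ‖A₁ u‖ ‖A₂ u‖ * (ε + ‖h₀‖ * D u) + ‖A₁ u - A₂ u‖ * ‖h₀‖ ≤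
              min ‖A₁ u‖ ‖A₂ u‖ * K + ‖A₁ u - A₂ u‖ * ‖h₀‖ := by
            apply add_le_add_left
            apply mul_le_mul_of_nonneg_left _ hmm0
            rw [hKdef]
            exact add_le_add_right
              (mul_le_mul_of_nonneg_left (hDm huIcc ht'Icc hu.2) (norm_nonneg _)) _
          have hf0 : 0 ≤ min ‖A₁ u‖ ‖A₂ u‖ * (ε + ‖h₀‖ * D u) + ‖A₁ u - A₂ u‖ * ‖h₀‖ := by
            have h01 : 0 ≤ ε + ‖h₀‖ * D u := by
              have := mul_nonneg (norm_nonneg h₀) (hD0 u huIcc); linarith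
            positivity
          have hf2 : Real.exp (M u) ≤ Real.exp (M t') :=
            Real.exp_le_exp.2 (hMm huIcc ht'Icc hu.2)
          rw [hφdef]
          exact mul_le_mul hf1 hf2 (Real.exp_pos _).le
            (le_trans hf0 hf1)
        have heval : (∫ u in s'..t', (min ‖A₁ u‖ ‖A₂ u‖ * K + ‖A₁ u - A₂ u‖ * ‖h₀‖) *
            Real.exp (M t')) =
            ((∫ u in s'..t', min ‖A₁ u‖ ‖A₂ u‖) * K +
             (∫ u in s'..t', ‖A₁ u - A₂ u‖) * ‖h₀‖) * Real.exp (M t') := by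
          rw [intervalIntegral.integral_mul_const,
            intervalIntegral.integral_add ((subInt hmm h1' h2' ht'b).mul_const K)
              ((subInt hdd h1' h2' ht'b).mul_const ‖h₀‖),
            intervalIntegral.integral_mul_const, intervalIntegral.integral_mul_const]
        have hDdiff : (∫ u in s'..t', ‖A₁ u - A₂ u‖) = D t' - D s' :=
          (primDiff hdd h1' h2' ht'b).symm
        have hmm' := hmmM s' t' h1' h2' ht'b
        have hkey := key2' k K (M t') (M s') hk0 hkK (hMm hs'Icc ht'Icc h2')
        have hstep : ((∫ u in s'..t', min ‖A₁ u‖ ‖A₂ u‖) * K +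
            (∫ u in s'..t', ‖A₁ u - A₂ u‖) * ‖h₀‖) * Real.exp (M t') ≤
            Real.exp (M t') * (K * (M t' - M s') + (K - k)) := by
          have hKk : (D t' - D s') * ‖h₀‖ = K - k := by
            rw [hKdef, hkdef]; ring
          rw [hDdiff, hKk]
          have := mul_le_mul_of_nonneg_right hmm' hK0
          nlinarith [Real.exp_pos (M t')]
        calc (∫ u in s'..t', φ u) ≤ _ := hmono1
          _ = _ := heval
          _ ≤ Real.exp (M t') * (K * (M t' - M s') + (K - k)) := hstep
          _ ≤ (1 + (M t' - M s')) * (K * Real.exp (M t') - k * Real.exp (M s')) := hkey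
      rw [hMa, hDa, Real.exp_zero, mul_zero, add_zero, mul_one] at h3
      calc ‖h₁ t - h₂ t‖ ≤ ∫ s in a..t, ‖A₁ s (h₁ s) - A₂ s (h₂ s)‖ := h1
        _ ≤ ∫ s in a..t, φ s := h2
        _ ≤ (ε + ‖h₀‖ * D t) * Real.exp (M t) - ε := h3
        _ < (ε + ‖h₀‖ * D t) * Real.exp (M t) := by linarith
  -- conclude
  have hub : ‖h₁ b - h₂ b‖ ≤ ‖h₀‖ * D b * Real.exp (M b) := by
    refine le_of_forall_pos_le_add fun ε' hε' => ?_
    have hεp : 0 < ε' / Real.exp (M b) := div_pos hε' (Real.exp_pos _)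
    have hm := (main _ hεp b ⟨hab, le_rfl⟩).le
    have hcalc : (ε' / Real.exp (M b) + ‖h₀‖ * D b) * Real.exp (M b) =
        ‖h₀‖ * D b * Real.exp (M b) + ε' := by
      field_simp
      ring
    linarith [hm.trans_eq hcalc]
  have hBapp : (B₁ - B₂) h₀ = h₁ b - h₂ b := by
    rw [ContinuousLinearMap.sub_apply, hb₁, hb₂]
  rw [hBapp]
  calc ‖h₁ b - h₂ b‖ ≤ ‖h₀‖ * D b * Real.exp (M b) := hub
    _ = Real.exp (M b) * D b * ‖h₀‖ := by ring
    _ = Real.exp (max (∫ τ in a..b, ‖A₁ τ‖) (∫ τ in a..b, ‖A₂ τ‖)) *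
        (∫ τ in a..b, ‖A₁ τ - A₂ τ‖) * ‖h₀‖ := rfl
end
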